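/- The sum over triples of partitions Π = (π1,π2,π3) with total size 2 of the localization contributions C(Π) (defined as in the arm-leg product formula) equals 35. -/

import Mathlib

open MvPolynomial

/-- The field `ℚ(s₁,s₂)` of rational functions in the equivariant parameters. -/
noncomputable abbrev EqK : Type := FractionRing (MvPolynomial (Fin 2) ℚ)

/-- The equivariant parameter `s₁`. -/
noncomputable def s₁ : EqK := algebraMap (MvPolynomial (Fin 2) ℚ) EqK (X 0)

/-- The equivariant parameter `s₂`. -/
noncomputable def s₂ : EqK := algebraMap (MvPolynomial (Fin 2) ℚ) EqK (X 1)

/-- Arm length `a(b)` of a box `b = (i,j)` in a Young diagram. -/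
def armZ (μ : YoungDiagram) (b : ℕ × ℕ) : ℤ := (μ.colLen b.2 : ℤ) - b.1 - 1

/-- Leg length `l(b)` of a box `b = (i,j)` in a Young diagram. -/
def legZ (μ : YoungDiagram) (b : ℕ × ℕ) : ℤ := (μ.rowLen b.1 : ℤ) - b.2 - 1

/-- The localization factor attached to a partition playing the role of `π₂`:
`∏_{b∈π₂} [((a-l-2)s₁ - a s₂)((l-a-2)s₁ + (a+1)s₂)] /
          [((a-l-1)s₁ - a s₂)((l-a-1)s₁ + (a+1)s₂)]`. -/
noncomputable def contribFactor (u v : EqK) (μ : YoungDiagram) : EqK :=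
  ∏ b ∈ μ.cells,
    (let a : EqK := (armZ μ b : ℤ); let l : EqK := (legZ μ b : ℤ);
      ((a - l - 2) * u - a * v) * ((l - a - 2) * u + (a + 1) * v) /
        (((a - l - 1) * u - a * v) * ((l - a - 1) * u + (a + 1) * v)))

/-- The localization contribution `C(Π)` of a triple of partitions
`Π = (π₁, π₂, π₃)`: boxes of `π₁` contribute the factor 1, boxes of `π₂` and
`π₃` contribute the arm–leg factors (with the roles of `s₁, s₂` swapped). -/
noncomputable def locContrib (tr : YoungDiagram × YoungDiagram × YoungDiagram) : EqK :=
  contribFactor s₁ s₂ tr.2.1 * contribFactor s₂ s₁ tr.2.2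

/-! ### Auxiliary material -/

lemma hs1 : s₁ ≠ 0 := by
  have h := IsFractionRing.injective (MvPolynomial (Fin 2) ℚ) EqK
  simpa [s₁] using h.ne (MvPolynomial.X_ne_zero (R := ℚ) (0 : Fin 2))

lemma hs2 : s₂ ≠ 0 := by
  have h := IsFractionRing.injective (MvPolynomial (Fin 2) ℚ) EqK
  simpa [s₂] using h.ne (MvPolynomial.X_ne_zero (R := ℚ) (1 : Fin 2))

lemma hs12 : s₁ - s₂ ≠ 0 := by
  have h := IsFractionRing.injective (MvPolynomial (Fin 2) ℚ) EqK
  have hx : (X 0 : MvPolynomial (Fin 2) ℚ) - X 1 ≠ 0 :=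
    sub_ne_zero.mpr (fun he => by simpa using (MvPolynomial.X_injective he : (0 : Fin 2) = 1))
  have := h.ne hx
  simpa [s₁, s₂, map_sub] using this

lemma hs21 : s₂ - s₁ ≠ 0 := fun h => hs12 (by linear_combination -h)

/-- The one-box Young diagram. -/
def μ1 : YoungDiagram := ⟨{(0,0)}, by
  rintro ⟨a1,a2⟩ ⟨b1,b2⟩ ⟨h1,h2⟩ ha
  simp only [Finset.coe_singleton, Set.mem_singleton_iff, Prod.mk.injEq] at ha ⊢
  omega⟩

/-- The two-box row Young diagram. -/
def μR : YoungDiagram := ⟨{(0,0),(0,1)}, by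
  rintro ⟨a1,a2⟩ ⟨b1,b2⟩ ⟨h1,h2⟩ ha
  simp only [Finset.coe_insert, Finset.coe_singleton, Set.mem_insert_iff,
    Set.mem_singleton_iff, Prod.mk.injEq] at ha ⊢
  omega⟩

/-- The two-box column Young diagram. -/
def μC : YoungDiagram := ⟨{(0,0),(1,0)}, by
  rintro ⟨a1,a2⟩ ⟨b1,b2⟩ ⟨h1,h2⟩ ha
  simp only [Finset.coe_insert, Finset.coe_singleton, Set.mem_insert_iff,
    Set.mem_singleton_iff, Prod.mk.injEq] at ha ⊢
  omega⟩

lemma mem00 (μ : YoungDiagram) (h : 0 < μ.card) : ((0:ℕ),(0:ℕ)) ∈ μ := by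
  rw [YoungDiagram.card, Finset.card_pos] at h
  obtain ⟨⟨i,j⟩, hx⟩ := h
  exact μ.up_left_mem (Nat.zero_le _) (Nat.zero_le _) hx

lemma card_zero {μ : YoungDiagram} (h : μ.card = 0) : μ = ⊥ := by
  ext x
  rw [YoungDiagram.card, Finset.card_eq_zero] at h
  simp [← YoungDiagram.mem_cells, h]

lemma card_one {μ : YoungDiagram} (h : μ.card = 1) : μ = μ1 := by
  have h0 : ((0:ℕ),(0:ℕ)) ∈ μ := mem00 μ (by omega)
  rw [YoungDiagram.card, Finset.card_eq_one] at h
  obtain ⟨x, hx⟩ := h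
  have hx0 : x = (0,0) := by
    have := h0; rw [← YoungDiagram.mem_cells, hx, Finset.mem_singleton] at this
    exact this.symm
  ext c; rw [hx, hx0]; rfl

lemma card_two {μ : YoungDiagram} (h : μ.card = 2) : μ = μR ∨ μ = μC := by
  have h0 : ((0:ℕ),(0:ℕ)) ∈ μ := mem00 μ (by omega)
  rw [YoungDiagram.card, Finset.card_eq_two] at h
  obtain ⟨x, y, hxy, hc⟩ := h
  have h0' : (0,0) ∈ μ.cells := h0
  rw [hc, Finset.mem_insert, Finset.mem_singleton] at h0'
  obtain ⟨⟨i,j⟩, hz, hzne⟩ : ∃ z : ℕ × ℕ, μ.cells = {((0:ℕ),(0:ℕ)), z} ∧ z ≠ (0,0) := by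
    rcases h0' with rfl | rfl
    · exact ⟨y, hc, hxy.symm⟩
    · exact ⟨x, by rw [hc, Finset.pair_comm], hxy⟩
  have hmem : ∀ c : ℕ × ℕ, c ∈ μ ↔ c = (0,0) ∨ c = (i,j) := by
    intro c
    rw [← YoungDiagram.mem_cells, hz, Finset.mem_insert, Finset.mem_singleton]
  rcases Nat.eq_zero_or_pos i with hi | hi
  · subst hi
    have hj1 : j = 1 := by
      have hj : 1 ≤ j := by
        rcases Nat.eq_zero_or_pos j with rfl | h; · simp at hzne
        · exact h
      have : ((0:ℕ),(1:ℕ)) ∈ μ := μ.up_left_mem le_rfl hj ((hmem _).2 (Or.inr rfl))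
      rcases (hmem _).1 this with h' | h' <;> simp_all
    left
    ext c
    rw [hz, hj1]; rfl
  · rcases Nat.eq_zero_or_pos j with hj | hj
    · subst hj
      have hi1 : i = 1 := by
        have : ((1:ℕ),(0:ℕ)) ∈ μ := μ.up_left_mem hi le_rfl ((hmem _).2 (Or.inr rfl))
        rcases (hmem _).1 this with h' | h' <;> simp_all
      right
      ext c
      rw [hz, hi1]; rfl
    · exfalso
      have h10 : ((1:ℕ),(0:ℕ)) ∈ μ := μ.up_left_mem hi (Nat.zero_le _) ((hmem _).2 (Or.inr rfl))
      have h01 : ((0:ℕ),(1:ℕ)) ∈ μ := μ.up_left_mem (Nat.zero_le _) hj ((hmem _).2 (Or.inr rfl))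
      rcases (hmem _).1 h10 with h' | h' <;> rcases (hmem _).1 h01 with h'' | h'' <;>
        simp only [Prod.mk.injEq] at h' h'' <;> omega

lemma rc_helper_row {μ : YoungDiagram} {i k : ℕ} (h1 : k = 0 ∨ (i, k-1) ∈ μ)
    (h2 : (i, k) ∉ μ) : μ.rowLen i = k := by
  rw [YoungDiagram.mem_iff_lt_rowLen] at h2
  rcases h1 with rfl | h1
  · omega
  · rw [YoungDiagram.mem_iff_lt_rowLen] at h1; omega

lemma rc_helper_col {μ : YoungDiagram} {j k : ℕ} (h1 : k = 0 ∨ (k-1, j) ∈ μ)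
    (h2 : (k, j) ∉ μ) : μ.colLen j = k := by
  rw [YoungDiagram.mem_iff_lt_colLen] at h2
  rcases h1 with rfl | h1
  · omega
  · rw [YoungDiagram.mem_iff_lt_colLen] at h1; omega

lemma arm1 : armZ μ1 (0,0) = 0 := by
  have : μ1.colLen 0 = 1 := rc_helper_col (Or.inr (by decide)) (by decide)
  simp [armZ, this]
lemma leg1 : legZ μ1 (0,0) = 0 := by
  have : μ1.rowLen 0 = 1 := rc_helper_row (Or.inr (by decide)) (by decide)
  simp [legZ, this]
lemma armR0 : armZ μR (0,0) = 0 := by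
  have : μR.colLen 0 = 1 := rc_helper_col (Or.inr (by decide)) (by decide)
  simp [armZ, this]
lemma legR0 : legZ μR (0,0) = 1 := by
  have : μR.rowLen 0 = 2 := rc_helper_row (Or.inr (by decide)) (by decide)
  simp [legZ, this]
lemma armR1 : armZ μR (0,1) = 0 := by
  have : μR.colLen 1 = 1 := rc_helper_col (Or.inr (by decide)) (by decide)
  simp [armZ, this]
lemma legR1 : legZ μR (0,1) = 0 := by
  have : μR.rowLen 0 = 2 := rc_helper_row (Or.inr (by decide)) (by decide)
  simp [legZ, this]
lemma armC0 : armZ μC (0,0) = 1 := by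
  have : μC.colLen 0 = 2 := rc_helper_col (Or.inr (by decide)) (by decide)
  simp [armZ, this]
lemma legC0 : legZ μC (0,0) = 0 := by
  have : μC.rowLen 0 = 1 := rc_helper_row (Or.inr (by decide)) (by decide)
  simp [legZ, this]
lemma armC1 : armZ μC (1,0) = 0 := by
  have : μC.colLen 0 = 2 := rc_helper_col (Or.inr (by decide)) (by decide)
  simp [armZ, this]
lemma legC1 : legZ μC (1,0) = 0 := by
  have : μC.rowLen 1 = 1 := rc_helper_row (Or.inr (by decide)) (by decide)
  simp [legZ, this]

lemma cf_bot (u v : EqK) : contribFactor u v ⊥ = 1 := by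
  rw [contribFactor]
  simp [YoungDiagram.cells_bot]

lemma cf_mu1 (u v : EqK) (hu : u ≠ 0) (hvu : v - u ≠ 0) :
    contribFactor u v μ1 = 2*(v-2*u)/(v-u) := by
  rw [contribFactor, show μ1.cells = {((0:ℕ),(0:ℕ))} from rfl, Finset.prod_singleton]
  rw [arm1, leg1]
  push_cast
  norm_num
  have h' : -u + v ≠ 0 := by rwa [neg_add_eq_sub]
  rw [div_eq_div_iff (mul_ne_zero hu h') hvu]
  ring

lemma cf_muR (u v : EqK) (hu : u ≠ 0) (hv : v ≠ 0) (hvu : v - u ≠ 0) :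
    contribFactor u v μR = 3*(v-2*u)/v := by
  rw [contribFactor, show μR.cells = {((0:ℕ),(0:ℕ)), ((0:ℕ),(1:ℕ))} from rfl]
  rw [Finset.prod_insert (by decide), Finset.prod_singleton]
  rw [armR0, legR0, armR1, legR1]
  push_cast
  norm_num
  have h' : -u + v ≠ 0 := by rwa [neg_add_eq_sub]
  rw [div_mul_div_comm,
    div_eq_div_iff (mul_ne_zero (mul_ne_zero (by simpa using hu) hv) (mul_ne_zero hu h')) hv]
  ring

lemma cf_muC (u v : EqK) (hu : u ≠ 0) (hv : v ≠ 0) (hvu : v - u ≠ 0) :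
    contribFactor u v μC = (u+v)*(2*v-3*u)*(v-2*u)/(v*(v-u)^2) := by
  rw [contribFactor, show μC.cells = {((0:ℕ),(0:ℕ)), ((1:ℕ),(0:ℕ))} from rfl]
  rw [Finset.prod_insert (by decide), Finset.prod_singleton]
  rw [armC0, legC0, armC1, legC1]
  push_cast
  norm_num
  have h' : -u + v ≠ 0 := by rwa [neg_add_eq_sub]
  have hd1 : -(v * (-(2 * u) + 2 * v)) ≠ 0 := by
    simp only [ne_eq, neg_eq_zero, mul_eq_zero, not_or]
    refine ⟨hv, fun h => hvu ?_⟩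
    linear_combination h / 2
  have hd2 : v * (v - u) ^ 2 ≠ 0 := mul_ne_zero hv (pow_ne_zero _ hvu)
  rw [div_mul_div_comm, div_eq_div_iff (mul_ne_zero hd1 (mul_ne_zero hu h')) hd2]
  ring

lemma neRC : μR ≠ μC := fun h => absurd (congrArg YoungDiagram.cells h) (by decide)
lemma neRb : μR ≠ ⊥ := fun h => absurd (congrArg YoungDiagram.cells h) (by decide)
lemma neCb : μC ≠ ⊥ := fun h => absurd (congrArg YoungDiagram.cells h) (by decide)
lemma ne1b : μ1 ≠ ⊥ := fun h => absurd (congrArg YoungDiagram.cells h) (by decide)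
lemma ne1R : μ1 ≠ μR := fun h => absurd (congrArg YoungDiagram.cells h) (by decide)
lemma ne1C : μ1 ≠ μC := fun h => absurd (congrArg YoungDiagram.cells h) (by decide)

lemma key {K : Type*} [Field K] (u v : K) (hu : u ≠ 0) (hv : v ≠ 0)
    (huv : u - v ≠ 0) (hvu : v - u ≠ 0) :
    1 + (1 + (2*(v-2*u)/(v-u) + (2*(u-2*v)/(u-v) + (3*(v-2*u)/v +
      ((u+v)*(2*v-3*u)*(v-2*u)/(v*(v-u)^2) + ((2*(v-2*u)/(v-u))*(2*(u-2*v)/(u-v)) +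
      (3*(u-2*v)/u + (v+u)*(2*u-3*v)*(u-2*v)/(u*(u-v)^2)))))))) = 35 := by
  set D : K := u*v*(u-v)^2*(v-u)^2 with hDdef
  have hD : D ≠ 0 :=
    mul_ne_zero (mul_ne_zero (mul_ne_zero hu hv) (pow_ne_zero _ huv)) (pow_ne_zero _ hvu)
  rw [show (2*(v-2*u)/(v-u))*(2*(u-2*v)/(u-v)) = (4*(v-2*u)*(u-2*v)*(u*v*(u-v)*(v-u))) / D by
        rw [div_mul_div_comm, div_eq_div_iff (mul_ne_zero hvu huv) hD]; rw [hDdef]; ring,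
      show 2*(v-2*u)/(v-u) = (2*(v-2*u)*(u*v*(u-v)^2*(v-u))) / D by
        rw [div_eq_div_iff hvu hD]; rw [hDdef]; ring,
      show 2*(u-2*v)/(u-v) = (2*(u-2*v)*(u*v*(u-v)*(v-u)^2)) / D by
        rw [div_eq_div_iff huv hD]; rw [hDdef]; ring,
      show 3*(v-2*u)/v = (3*(v-2*u)*(u*(u-v)^2*(v-u)^2)) / D by
        rw [div_eq_div_iff hv hD]; rw [hDdef]; ring,
      show (u+v)*(2*v-3*u)*(v-2*u)/(v*(v-u)^2) = ((u+v)*(2*v-3*u)*(v-2*u)*(u*(u-v)^2)) / D by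
        rw [div_eq_div_iff (mul_ne_zero hv (pow_ne_zero _ hvu)) hD]; rw [hDdef]; ring,
      show 3*(u-2*v)/u = (3*(u-2*v)*(v*(u-v)^2*(v-u)^2)) / D by
        rw [div_eq_div_iff hu hD]; rw [hDdef]; ring,
      show (v+u)*(2*u-3*v)*(u-2*v)/(u*(u-v)^2) = ((v+u)*(2*u-3*v)*(u-2*v)*(v*(v-u)^2)) / D by
        rw [div_eq_div_iff (mul_ne_zero hu (pow_ne_zero _ huv)) hD]; rw [hDdef]; ring,
      show (1:K) = D/D from (div_self hD).symm]
  simp only [← add_div]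
  rw [div_eq_iff hD, hDdef]
  ring

set_option maxHeartbeats 1000000 in
/-- The sum over all triples of partitions `Π = (π₁,π₂,π₃)` with
`|π₁| + |π₂| + |π₃| = 2` of the localization contributions `C(Π)` equals `35`;
this computes `DT(ℙ³;P;π^*[pt]) = ∫_{Hilb²(ℙ²)} c₄(E) = 35`. -/
theorem sum_localization_contributions_size_two
    (T : Finset (YoungDiagram × YoungDiagram × YoungDiagram))
    (hT : ∀ tr : YoungDiagram × YoungDiagram × YoungDiagram,
      tr ∈ T ↔ tr.1.card + tr.2.1.card + tr.2.2.card = 2) :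
    ∑ tr ∈ T, locContrib tr = 35 := by
  classical
  have hTS : T =
      ({(μR,⊥,⊥),(μC,⊥,⊥),(μ1,μ1,⊥),(μ1,⊥,μ1),(⊥,μR,⊥),(⊥,μC,⊥),(⊥,μ1,μ1),(⊥,⊥,μR),(⊥,⊥,μC)} :
        Finset (YoungDiagram × YoungDiagram × YoungDiagram)) := by
    ext ⟨p1,p2,p3⟩
    rw [hT]
    simp only [Finset.mem_insert, Finset.mem_singleton, Prod.mk.injEq]
    constructor
    · intro h
      have ha : p1.card = 0 ∨ p1.card = 1 ∨ p1.card = 2 := by omega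
      have hb : p2.card = 0 ∨ p2.card = 1 ∨ p2.card = 2 := by omega
      have hc : p3.card = 0 ∨ p3.card = 1 ∨ p3.card = 2 := by omega
      rcases ha with h1|h1|h1 <;> rcases hb with h2|h2|h2 <;> rcases hc with h3|h3|h3 <;>
        try omega
      · obtain rfl := card_zero h1; obtain rfl := card_zero h2
        rcases card_two h3 with rfl|rfl <;> simp
      · obtain rfl := card_zero h1; obtain rfl := card_one h2; obtain rfl := card_one h3
        simp
      · obtain rfl := card_zero h1; obtain rfl := card_zero h3
        rcases card_two h2 with rfl|rfl <;> simp
      · obtain rfl := card_one h1; obtain rfl := card_zero h2; obtain rfl := card_one h3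
        simp
      · obtain rfl := card_one h1; obtain rfl := card_one h2; obtain rfl := card_zero h3
        simp
      · obtain rfl := card_zero h2; obtain rfl := card_zero h3
        rcases card_two h1 with rfl|rfl <;> simp
    · intro h
      rcases h with ⟨rfl,rfl,rfl⟩|⟨rfl,rfl,rfl⟩|⟨rfl,rfl,rfl⟩|⟨rfl,rfl,rfl⟩|⟨rfl,rfl,rfl⟩|
        ⟨rfl,rfl,rfl⟩|⟨rfl,rfl,rfl⟩|⟨rfl,rfl,rfl⟩|⟨rfl,rfl,rfl⟩ <;>
        simp [show (⊥ : YoungDiagram).card = 0 from rfl, show μ1.card = 1 from rfl,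
          show μR.card = 2 from rfl, show μC.card = 2 from rfl]
  rw [hTS]
  rw [Finset.sum_insert (by
        simp [Prod.ext_iff, neRC, neRb, neCb, ne1b, ne1R, ne1C,
          neRC.symm, neRb.symm, neCb.symm, ne1b.symm, ne1R.symm, ne1C.symm]),
      Finset.sum_insert (by
        simp [Prod.ext_iff, neRC, neRb, neCb, ne1b, ne1R, ne1C,
          neRC.symm, neRb.symm, neCb.symm, ne1b.symm, ne1R.symm, ne1C.symm]),
      Finset.sum_insert (by
        simp [Prod.ext_iff, neRC, neRb, neCb, ne1b, ne1R, ne1C,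
          neRC.symm, neRb.symm, neCb.symm, ne1b.symm, ne1R.symm, ne1C.symm]),
      Finset.sum_insert (by
        simp [Prod.ext_iff, neRC, neRb, neCb, ne1b, ne1R, ne1C,
          neRC.symm, neRb.symm, neCb.symm, ne1b.symm, ne1R.symm, ne1C.symm]),
      Finset.sum_insert (by
        simp [Prod.ext_iff, neRC, neRb, neCb, ne1b, ne1R, ne1C,
          neRC.symm, neRb.symm, neCb.symm, ne1b.symm, ne1R.symm, ne1C.symm]),
      Finset.sum_insert (by
        simp [Prod.ext_iff, neRC, neRb, neCb, ne1b, ne1R, ne1C,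
          neRC.symm, neRb.symm, neCb.symm, ne1b.symm, ne1R.symm, ne1C.symm]),
      Finset.sum_insert (by
        simp [Prod.ext_iff, neRC, neRb, neCb, ne1b, ne1R, ne1C,
          neRC.symm, neRb.symm, neCb.symm, ne1b.symm, ne1R.symm, ne1C.symm]),
      Finset.sum_insert (by
        simp [Prod.ext_iff, neRC, neRb, neCb, ne1b, ne1R, ne1C,
          neRC.symm, neRb.symm, neCb.symm, ne1b.symm, ne1R.symm, ne1C.symm]),
      Finset.sum_singleton]
  simp only [locContrib]
  simp only [cf_bot, one_mul, mul_one]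
  rw [cf_mu1 s₁ s₂ hs1 hs21, cf_mu1 s₂ s₁ hs2 hs12,
    cf_muR s₁ s₂ hs1 hs2 hs21, cf_muR s₂ s₁ hs2 hs1 hs12,
    cf_muC s₁ s₂ hs1 hs2 hs21, cf_muC s₂ s₁ hs2 hs1 hs12]
  exact key s₁ s₂ hs1 hs2 hs12 hs21
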